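/- With γ and φ as defined from constants K₁ ≥ 0, K₂ > 0, L ≥ 0 (γ(v) = (K₁+K₂)v·1_{[0,L]}(v) − K₂v, φ'(r) = e^{-∫_0^r γ} ∫_r^∞ l e^{∫_0^l γ} dl), the derivative φ' is bounded above and below by positive constants: 0 < C₊ := inf_{r≥0} φ'(r) ≤ sup_{r≥0} φ'(r) =: C* < ∞. Consequently, C₊ r ≤ φ(r) ≤ C* r for all r ≥ 0. -/

import Mathlib

open MeasureTheory intervalIntegral Set Real

/-- `γ(v) = (K₁+K₂) v 1_{[0,L]}(v) - K₂ v`. -/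
noncomputable def gam (K₁ K₂ L : ℝ) (v : ℝ) : ℝ :=
  Set.indicator (Set.Icc 0 L) (fun w => (K₁ + K₂) * w) v - K₂ * v

/-- `φ'(r) = e^{-∫_0^r γ} ∫_r^∞ l e^{∫_0^l γ} dl`. -/
noncomputable def phiDeriv (K₁ K₂ L : ℝ) (r : ℝ) : ℝ :=
  Real.exp (-∫ v in (0:ℝ)..r, gam K₁ K₂ L v) *
    ∫ l in Set.Ioi r, l * Real.exp (∫ v in (0:ℝ)..l, gam K₁ K₂ L v)

/-- `φ(r) = ∫_0^r φ'(u) du`. -/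
noncomputable def phiFun (K₁ K₂ L : ℝ) (r : ℝ) : ℝ :=
  ∫ u in (0:ℝ)..r, phiDeriv K₁ K₂ L u

section aux
variable {K₁ K₂ L : ℝ}

lemma gam_ii (K₁ K₂ L : ℝ) (a b : ℝ) : IntervalIntegrable (gam K₁ K₂ L) volume a b := by
  apply IntervalIntegrable.sub
  · rw [intervalIntegrable_iff]
    refine Integrable.integrableOn ?_
    refine MeasureTheory.IntegrableOn.integrable_indicator ?_ measurableSet_Icc
    exact (Continuous.integrableOn_Icc (by continuity))
  · exact ((continuous_const.mul continuous_id).intervalIntegrable a b)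

lemma G_le (hL : 0 ≤ L) {r : ℝ} (h0 : 0 ≤ r) (hr : r ≤ L) :
    (∫ v in (0:ℝ)..r, gam K₁ K₂ L v) = K₁ * r ^ 2 / 2 := by
  have : EqOn (gam K₁ K₂ L) (fun v => K₁ * v) (uIcc 0 r) := by
    intro x hx
    rw [uIcc_of_le h0] at hx
    unfold gam
    rw [Set.indicator_of_mem (Set.mem_Icc.mpr ⟨hx.1, hx.2.trans hr⟩)]
    ring
  rw [intervalIntegral.integral_congr this]
  rw [intervalIntegral.integral_const_mul, integral_id]
  ring

lemma G_ge (hL : 0 ≤ L) {r : ℝ} (hr : L ≤ r) :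
    (∫ v in (0:ℝ)..r, gam K₁ K₂ L v) = (K₁ + K₂) * L ^ 2 / 2 - K₂ * r ^ 2 / 2 := by
  have h0 : (0:ℝ) ≤ r := hL.trans hr
  have key : (∫ v in (0:ℝ)..r, Set.indicator (Set.Icc 0 L) (fun w => (K₁ + K₂) * w) v)
      = (K₁ + K₂) * L ^ 2 / 2 := by
    have hcong : EqOn (Set.indicator (Set.Icc 0 L) (fun w => (K₁ + K₂) * w))
        (Set.indicator {x | x ≤ L} (fun w => (K₁ + K₂) * w)) (uIcc 0 r) := by
      intro x hx
      rw [uIcc_of_le h0] at hx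
      simp only [Set.indicator_apply, Set.mem_Icc, Set.mem_setOf_eq]
      by_cases h : x ≤ L
      · rw [if_pos ⟨hx.1, h⟩, if_pos h]
      · rw [if_neg (fun hc => h hc.2), if_neg h]
    rw [intervalIntegral.integral_congr hcong,
      intervalIntegral.integral_indicator ⟨hL, hr⟩,
      intervalIntegral.integral_const_mul, integral_id]
    ring
  have : (∫ v in (0:ℝ)..r, gam K₁ K₂ L v)
      = (∫ v in (0:ℝ)..r, Set.indicator (Set.Icc 0 L) (fun w => (K₁ + K₂) * w) v)
        - ∫ v in (0:ℝ)..r, K₂ * v := by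
    unfold gam
    rw [intervalIntegral.integral_sub]
    · rw [intervalIntegrable_iff]
      refine Integrable.integrableOn ?_
      refine MeasureTheory.IntegrableOn.integrable_indicator ?_ measurableSet_Icc
      exact (Continuous.integrableOn_Icc (by continuity))
    · exact ((continuous_const.mul continuous_id).intervalIntegrable 0 r)
  rw [this, key, intervalIntegral.integral_const_mul, integral_id]
  ring

end aux

section aux2
variable {K₁ K₂ L : ℝ}

lemma contG (K₁ K₂ L : ℝ) : Continuous (fun r : ℝ => ∫ v in (0:ℝ)..r, gam K₁ K₂ L v) :=
  intervalIntegral.continuous_primitive (gam_ii K₁ K₂ L) 0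

lemma contf (K₁ K₂ L : ℝ) :
    Continuous (fun l : ℝ => l * Real.exp (∫ v in (0:ℝ)..l, gam K₁ K₂ L v)) :=
  continuous_id.mul (Real.continuous_exp.comp (contG K₁ K₂ L))

lemma f_Ioi (hK₂ : 0 < K₂) (hL : 0 ≤ L) {r : ℝ} (hr : L ≤ r) :
    IntegrableOn (fun l => l * Real.exp (∫ v in (0:ℝ)..l, gam K₁ K₂ L v)) (Ioi r) volume ∧
    (∫ l in Ioi r, l * Real.exp (∫ v in (0:ℝ)..l, gam K₁ K₂ L v))
      = Real.exp (∫ v in (0:ℝ)..r, gam K₁ K₂ L v) / K₂ := by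
  have h0r : (0:ℝ) ≤ r := hL.trans hr
  set A := (K₁ + K₂) * L ^ 2 / 2 with hA
  set g : ℝ → ℝ := fun x => -(1/K₂) * Real.exp (A - K₂ * x ^ 2 / 2) with hg
  set g' : ℝ → ℝ := fun x => x * Real.exp (A - K₂ * x ^ 2 / 2) with hg'
  have hderiv : ∀ x ∈ Ici r, HasDerivAt g (g' x) x := by
    intro x _
    have h1 : HasDerivAt (fun x : ℝ => A - K₂ * x ^ 2 / 2) (-(K₂ * x)) x := by
      have := (((hasDerivAt_pow 2 x).const_mul K₂).div_const 2).const_sub A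
      refine this.congr_deriv ?_
      ring
    have := (h1.exp).const_mul (-(1/K₂))
    refine this.congr_deriv ?_
    simp only [hg']
    field_simp
  have hpos : ∀ x ∈ Ioi r, 0 ≤ g' x :=
    fun x hx => mul_nonneg (h0r.trans hx.le) (Real.exp_nonneg _)
  have htend : Filter.Tendsto g Filter.atTop (nhds 0) := by
    have h1 : Filter.Tendsto (fun x : ℝ => K₂ * x ^ 2 / 2) Filter.atTop Filter.atTop :=
      ((Filter.tendsto_pow_atTop two_ne_zero).const_mul_atTop hK₂).atTop_div_const two_pos
    have h2 : Filter.Tendsto (fun x : ℝ => A - K₂ * x ^ 2 / 2) Filter.atTop Filter.atBot := by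
      have := Filter.tendsto_neg_atTop_atBot.comp h1
      simpa [sub_eq_add_neg] using Filter.tendsto_atBot_add_const_left _ A this
    have := (Real.tendsto_exp_atBot.comp h2).const_mul (-(1/K₂))
    simpa [hg, one_div, neg_mul, Function.comp] using this
  have hInt := integrableOn_Ioi_deriv_of_nonneg' hderiv hpos htend
  have hval := integral_Ioi_of_hasDerivAt_of_nonneg' hderiv hpos htend
  have hcong : EqOn (fun l => l * Real.exp (∫ v in (0:ℝ)..l, gam K₁ K₂ L v)) g' (Ioi r) := by
    intro x hx
    simp only [hg', G_ge hL (hr.trans hx.out.le), hA]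
  constructor
  · exact (hInt.congr_fun (fun x hx => (hcong hx).symm) measurableSet_Ioi)
  · rw [setIntegral_congr_fun measurableSet_Ioi hcong, hval, G_ge hL hr, hg]
    simp only [hA]
    ring
end aux2

section aux3
variable {K₁ K₂ L : ℝ}

lemma f_int_Ioi (hK₂ : 0 < K₂) (hL : 0 ≤ L) {r : ℝ} (hr : 0 ≤ r) :
    IntegrableOn (fun l => l * Real.exp (∫ v in (0:ℝ)..l, gam K₁ K₂ L v)) (Ioi r) volume := by
  rcases le_total L r with h | h
  · exact (f_Ioi hK₂ hL h).1
  · rw [← Set.Ioc_union_Ioi_eq_Ioi h]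
    exact ((contf K₁ K₂ L).integrableOn_Ioc).union (f_Ioi hK₂ hL le_rfl).1

lemma f_split (hK₂ : 0 < K₂) (hL : 0 ≤ L) {r : ℝ} (h : r ≤ L) :
    (∫ l in Ioi r, l * Real.exp (∫ v in (0:ℝ)..l, gam K₁ K₂ L v))
      = (∫ l in Ioc r L, l * Real.exp (∫ v in (0:ℝ)..l, gam K₁ K₂ L v))
        + ∫ l in Ioi L, l * Real.exp (∫ v in (0:ℝ)..l, gam K₁ K₂ L v) := by
  rw [← setIntegral_union (Set.Ioc_disjoint_Ioi le_rfl) measurableSet_Ioi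
    ((contf K₁ K₂ L).integrableOn_Ioc) (f_Ioi hK₂ hL le_rfl).1,
    Set.Ioc_union_Ioi_eq_Ioi h]

lemma phiDeriv_ge (hK₁ : 0 ≤ K₁) (hK₂ : 0 < K₂) (hL : 0 ≤ L) {r : ℝ} (hr : 0 ≤ r) :
    1 / K₂ ≤ phiDeriv K₁ K₂ L r := by
  unfold phiDeriv
  rcases le_total L r with h | h
  · rw [(f_Ioi hK₂ hL h).2, Real.exp_neg]
    rw [inv_mul_eq_div, div_right_comm, div_self (Real.exp_ne_zero _)]
  · rw [f_split hK₂ hL h, (f_Ioi hK₂ hL le_rfl).2, G_le hL hr h, G_le hL hL le_rfl]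
    have h1 : 0 ≤ ∫ l in Ioc r L, l * Real.exp (∫ v in (0:ℝ)..l, gam K₁ K₂ L v) :=
      setIntegral_nonneg measurableSet_Ioc
        (fun x hx => mul_nonneg (hr.trans hx.1.le) (Real.exp_nonneg _))
    have h2 : 1 / K₂ ≤ Real.exp (-(K₁ * r ^ 2 / 2)) * (Real.exp (K₁ * L ^ 2 / 2) / K₂) := by
      rw [mul_div_assoc', ← Real.exp_add]
      gcongr
      exact Real.one_le_exp (by nlinarith [pow_le_pow_left₀ hr h 2])
    refine h2.trans ?_
    refine mul_le_mul_of_nonneg_left ?_ (Real.exp_nonneg _)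
    linarith

end aux3

lemma phiDeriv_le (hK₁ : 0 ≤ K₁) (hK₂ : 0 < K₂) (hL : 0 ≤ L) {r : ℝ} (hr : 0 ≤ r) :
    phiDeriv K₁ K₂ L r ≤ Real.exp (K₁ * L ^ 2 / 2) * (L ^ 2 + 1 / K₂) := by
  have hexp1 : (1:ℝ) ≤ Real.exp (K₁ * L ^ 2 / 2) := Real.one_le_exp (by positivity)
  have hKpos : (0:ℝ) < 1 / K₂ := by positivity
  unfold phiDeriv
  rcases le_total L r with h | h
  · rw [(f_Ioi hK₂ hL h).2, Real.exp_neg, inv_mul_eq_div, div_right_comm,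
      div_self (Real.exp_ne_zero _)]
    nlinarith [sq_nonneg L]
  · rw [f_split hK₂ hL h, (f_Ioi hK₂ hL le_rfl).2, G_le hL hr h, G_le hL hL le_rfl]
    have hI0 : 0 ≤ ∫ l in Ioc r L, l * Real.exp (∫ v in (0:ℝ)..l, gam K₁ K₂ L v) :=
      setIntegral_nonneg measurableSet_Ioc
        (fun x hx => mul_nonneg (hr.trans hx.1.le) (Real.exp_nonneg _))
    have hIle : (∫ l in Ioc r L, l * Real.exp (∫ v in (0:ℝ)..l, gam K₁ K₂ L v))
        ≤ (L - r) * (L * Real.exp (K₁ * L ^ 2 / 2)) := by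
      have hpt : ∀ x ∈ Ioc r L, x * Real.exp (∫ v in (0:ℝ)..x, gam K₁ K₂ L v)
          ≤ L * Real.exp (K₁ * L ^ 2 / 2) := by
        intro x hx
        have hx0 : 0 ≤ x := hr.trans hx.1.le
        rw [G_le hL hx0 hx.2]
        exact mul_le_mul hx.2 (Real.exp_le_exp.mpr (by nlinarith [pow_le_pow_left₀ hx0 hx.2 2]))
          (Real.exp_nonneg _) hL
      have hmono : (∫ l in Ioc r L, l * Real.exp (∫ v in (0:ℝ)..l, gam K₁ K₂ L v))
          ≤ ∫ _ in Ioc r L, L * Real.exp (K₁ * L ^ 2 / 2) :=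
        setIntegral_mono_on ((contf K₁ K₂ L).integrableOn_Ioc)
          (integrableOn_const measure_Ioc_lt_top.ne) measurableSet_Ioc hpt
      rwa [setIntegral_const, measureReal_def, Real.volume_Ioc, smul_eq_mul,
        ENNReal.toReal_ofReal (sub_nonneg.mpr h)] at hmono
    have e1 : Real.exp (-(K₁ * r ^ 2 / 2)) ≤ 1 := Real.exp_le_one_iff.mpr (neg_nonpos.mpr (by positivity))
    have hB : 0 ≤ (∫ l in Ioc r L, l * Real.exp (∫ v in (0:ℝ)..l, gam K₁ K₂ L v))
        + Real.exp (K₁ * L ^ 2 / 2) / K₂ := by positivity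
    calc Real.exp (-(K₁ * r ^ 2 / 2)) *
          ((∫ l in Ioc r L, l * Real.exp (∫ v in (0:ℝ)..l, gam K₁ K₂ L v))
            + Real.exp (K₁ * L ^ 2 / 2) / K₂)
        ≤ 1 * ((∫ l in Ioc r L, l * Real.exp (∫ v in (0:ℝ)..l, gam K₁ K₂ L v))
            + Real.exp (K₁ * L ^ 2 / 2) / K₂) := mul_le_mul_of_nonneg_right e1 hB
      _ ≤ Real.exp (K₁ * L ^ 2 / 2) * (L ^ 2 + 1 / K₂) := by
          rw [one_mul]
          have hrL : 0 ≤ r * L := mul_nonneg hr hL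
          have h3 : 0 ≤ r * L * Real.exp (K₁ * L ^ 2 / 2) := mul_nonneg hrL (by linarith)
          have h4 : Real.exp (K₁ * L ^ 2 / 2) * (L ^ 2 + 1 / K₂)
              = (L - r) * (L * Real.exp (K₁ * L ^ 2 / 2)) + Real.exp (K₁ * L ^ 2 / 2) / K₂
                + r * L * Real.exp (K₁ * L ^ 2 / 2) := by ring
          linarith

lemma phiDeriv_rep (hK₂ : 0 < K₂) (hL : 0 ≤ L) {u : ℝ} (hu : 0 ≤ u) :
    phiDeriv K₁ K₂ L u = Real.exp (-∫ v in (0:ℝ)..u, gam K₁ K₂ L v) *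
      ((∫ l in Ioi (0:ℝ), l * Real.exp (∫ v in (0:ℝ)..l, gam K₁ K₂ L v)) -
        ∫ l in (0:ℝ)..u, l * Real.exp (∫ v in (0:ℝ)..l, gam K₁ K₂ L v)) := by
  unfold phiDeriv
  congr 1
  rw [intervalIntegral.integral_of_le hu, eq_sub_iff_add_eq, add_comm,
    ← setIntegral_union (Set.Ioc_disjoint_Ioi le_rfl) measurableSet_Ioi
      ((contf K₁ K₂ L).integrableOn_Ioc) (f_int_Ioi hK₂ hL hu),
    Set.Ioc_union_Ioi_eq_Ioi hu]

lemma phiDeriv_ii (hK₂ : 0 < K₂) (hL : 0 ≤ L) {r : ℝ} (hr : 0 ≤ r) :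
    IntervalIntegrable (phiDeriv K₁ K₂ L) volume 0 r := by
  have hF : Continuous (fun u : ℝ => Real.exp (-∫ v in (0:ℝ)..u, gam K₁ K₂ L v) *
      ((∫ l in Ioi (0:ℝ), l * Real.exp (∫ v in (0:ℝ)..l, gam K₁ K₂ L v)) -
        ∫ l in (0:ℝ)..u, l * Real.exp (∫ v in (0:ℝ)..l, gam K₁ K₂ L v))) := by
    exact (Real.continuous_exp.comp (contG K₁ K₂ L).neg).mul
      (continuous_const.sub (intervalIntegral.continuous_primitive
        (fun a b => (contf K₁ K₂ L).intervalIntegrable a b) 0))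
  apply (hF.intervalIntegrable 0 r).congr
  rw [uIoc_of_le hr]
  exact fun x hx => (phiDeriv_rep hK₂ hL hx.1.le).symm

theorem phiDeriv_bounds
    (K₁ K₂ L : ℝ) (hK₁ : 0 ≤ K₁) (hK₂ : 0 < K₂) (hL : 0 ≤ L) :
    BddAbove (phiDeriv K₁ K₂ L '' Set.Ici (0:ℝ)) ∧
    0 < sInf (phiDeriv K₁ K₂ L '' Set.Ici (0:ℝ)) ∧
    (∀ r : ℝ, 0 ≤ r →
      sInf (phiDeriv K₁ K₂ L '' Set.Ici (0:ℝ)) * r ≤ phiFun K₁ K₂ L r ∧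
      phiFun K₁ K₂ L r ≤ sSup (phiDeriv K₁ K₂ L '' Set.Ici (0:ℝ)) * r) := by
  have hne : (phiDeriv K₁ K₂ L '' Set.Ici (0:ℝ)).Nonempty :=
    ⟨phiDeriv K₁ K₂ L 0, ⟨0, Set.self_mem_Ici, rfl⟩⟩
  have hub : ∀ x ∈ phiDeriv K₁ K₂ L '' Set.Ici (0:ℝ),
      x ≤ Real.exp (K₁ * L ^ 2 / 2) * (L ^ 2 + 1 / K₂) := by
    rintro x ⟨r, hr, rfl⟩; exact phiDeriv_le hK₁ hK₂ hL hr
  have hlb : ∀ x ∈ phiDeriv K₁ K₂ L '' Set.Ici (0:ℝ), 1 / K₂ ≤ x := by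
    rintro x ⟨r, hr, rfl⟩; exact phiDeriv_ge hK₁ hK₂ hL hr
  have hbdd : BddAbove (phiDeriv K₁ K₂ L '' Set.Ici (0:ℝ)) := ⟨_, hub⟩
  have hbddb : BddBelow (phiDeriv K₁ K₂ L '' Set.Ici (0:ℝ)) := ⟨_, hlb⟩
  refine ⟨hbdd, lt_of_lt_of_le (by positivity) (le_csInf hne hlb), ?_⟩
  intro r hr
  have hii := phiDeriv_ii (K₁ := K₁) hK₂ hL hr
  constructor
  · have := intervalIntegral.integral_mono_on hr (intervalIntegrable_const) hii
      (fun u hu => csInf_le hbddb ⟨u, Set.mem_Ici.mpr hu.1, rfl⟩)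
    simpa [phiFun, mul_comm] using this
  · have := intervalIntegral.integral_mono_on hr hii (intervalIntegrable_const)
      (fun u hu => le_csSup hbdd ⟨u, Set.mem_Ici.mpr hu.1, rfl⟩)
    simpa [phiFun, mul_comm] using this
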